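/- In each round t of AdaBoost.S, the edge satisfies δ_t ≥ R_{t−1}/B, where B = ‖λ*‖₁ > 0 and R_{t−1} = ln L(λ^{t−1}) − ln L(λ*). -/

import Mathlib

/-- The exponential loss `L(λ) = (1/m) ∑ᵢ exp(−(Mλ)ᵢ)`. -/
noncomputable def expLoss {m N : ℕ} (M : Matrix (Fin m) (Fin N) ℝ) (lam : Fin N → ℝ) : ℝ :=
  (1 / (m : ℝ)) * ∑ i, Real.exp (-(M.mulVec lam i))

/-- AdaBoost's distribution `D(i) ∝ exp(−(Mλ)ᵢ)`. -/
noncomputable def wt {m N : ℕ} (M : Matrix (Fin m) (Fin N) ℝ) (lam : Fin N → ℝ) (i : Fin m) : ℝ :=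
  Real.exp (-(M.mulVec lam i)) / ∑ i', Real.exp (-(M.mulVec lam i'))

/-- The ℓ₁-norm on `ℝ^N`. -/
noncomputable def l1 {N : ℕ} (v : Fin N → ℝ) : ℝ := ∑ j, |v j|


/-- `lam`, `j`, `r`, `s` describe a run of AdaBoost.S on feature matrix `M`:
`lam 0 = 0`; at each round the coordinate `j t` of maximal absolute correlation is chosen,
`r t` is its correlation, the step is `α_t = ½ ln((1+r_t)/(1−r_t))` giving the intermediate
combination `λ̃ = λ^{t} + α·e_{j t}`, and then `λ^{t+1} = s_t·λ̃` where
`s_t ∈ argmin_{s ∈ [0,1]} L(s·λ̃)`. -/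
def IsAdaBoostS {m N : ℕ} (M : Matrix (Fin m) (Fin N) ℝ)
    (lam : ℕ → Fin N → ℝ) (j : ℕ → Fin N) (r : ℕ → ℝ) (s : ℕ → ℝ) : Prop :=
  lam 0 = 0 ∧
  ∀ t : ℕ,
    (∀ j' : Fin N, |∑ i, wt M (lam t) i * M i j'| ≤ |∑ i, wt M (lam t) i * M i (j t)|) ∧
    r t = ∑ i, wt M (lam t) i * M i (j t) ∧
    s t ∈ Set.Icc (0 : ℝ) 1 ∧
    (∀ s' ∈ Set.Icc (0 : ℝ) 1,
      expLoss M (s t • (lam t + Pi.single (j t) ((1 / 2) * Real.log ((1 + r t) / (1 - r t))))) ≤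
      expLoss M (s' • (lam t + Pi.single (j t) ((1 / 2) * Real.log ((1 + r t) / (1 - r t)))))) ∧
    lam (t + 1) = s t • (lam t + Pi.single (j t) ((1 / 2) * Real.log ((1 + r t) / (1 - r t))))



lemma exp_sub_one_le_aux (z : ℝ) : Real.exp z - 1 ≤ z * Real.exp z := by
  have h1 := Real.add_one_le_exp (-z)
  have h2 : Real.exp (-z) * Real.exp z = 1 := by rw [← Real.exp_add]; simp
  nlinarith [Real.exp_pos z]

/-- Convexity of log-sum-exp: key inequality. -/
lemma key_logsum {m : ℕ} (hm : 0 < m) (a b : Fin m → ℝ) :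
    Real.log (∑ i, Real.exp (-(a i))) - Real.log (∑ i, Real.exp (-(b i))) ≤
    ∑ i, (Real.exp (-(a i)) / ∑ i', Real.exp (-(a i'))) * (b i - a i) := by
  haveI : Nonempty (Fin m) := ⟨⟨0, hm⟩⟩
  set S : ℝ := ∑ i', Real.exp (-(a i')) with hSdef
  have hS : 0 < S := Finset.sum_pos (fun i _ => Real.exp_pos _) Finset.univ_nonempty
  set c : ℝ := ∑ i, (Real.exp (-(a i)) / S) * (b i - a i) with hcdef
  have hsum : ∑ i, Real.exp (-(a i)) * (b i - a i) = S * c := by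
    rw [hcdef, Finset.mul_sum]
    refine Finset.sum_congr rfl fun i _ => ?_
    field_simp
  have h4 : ∑ i, Real.exp (-(a i)) * (1 + ((a i - b i) + c)) = S := by
    have he : ∀ i : Fin m, Real.exp (-(a i)) * (1 + ((a i - b i) + c)) =
        Real.exp (-(a i)) - Real.exp (-(a i)) * (b i - a i) + c * Real.exp (-(a i)) :=
      fun i => by ring
    simp_rw [he]
    rw [Finset.sum_add_distrib, Finset.sum_sub_distrib, hsum, ← Finset.mul_sum, ← hSdef]
    ring
  have hmain : S * Real.exp (-c) ≤ ∑ i, Real.exp (-(b i)) := by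
    calc S * Real.exp (-c)
        = ∑ i, Real.exp (-c) * (Real.exp (-(a i)) * (1 + ((a i - b i) + c))) := by
          rw [← Finset.mul_sum, h4]; ring
      _ ≤ ∑ i, Real.exp (-(b i)) := by
          refine Finset.sum_le_sum fun i _ => ?_
          have h := Real.add_one_le_exp ((a i - b i) + c)
          have heq : Real.exp (-c) * (Real.exp (-(a i)) * Real.exp ((a i - b i) + c))
              = Real.exp (-(b i)) := by
            rw [← Real.exp_add, ← Real.exp_add]; ring_nf
          have hpos : (0:ℝ) ≤ Real.exp (-c) * Real.exp (-(a i)) := by positivity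
          calc Real.exp (-c) * (Real.exp (-(a i)) * (1 + ((a i - b i) + c)))
              = (Real.exp (-c) * Real.exp (-(a i))) * ((a i - b i + c) + 1) := by ring
            _ ≤ (Real.exp (-c) * Real.exp (-(a i))) * Real.exp (a i - b i + c) :=
                mul_le_mul_of_nonneg_left h hpos
            _ = Real.exp (-(b i)) := by rw [← heq]; ring
  have hSb : 0 < ∑ i, Real.exp (-(b i)) :=
    Finset.sum_pos (fun i _ => Real.exp_pos _) Finset.univ_nonempty
  have hlog := Real.log_le_log (by positivity) hmain
  rw [Real.log_mul (ne_of_gt hS) (Real.exp_ne_zero _), Real.log_exp] at hlog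
  linarith

/-- First-order optimality at the scaling minimizer. -/
lemma kkt_nonneg {m : ℕ} (v : Fin m → ℝ) (s₀ : ℝ) (hs₀ : s₀ ∈ Set.Icc (0:ℝ) 1)
    (hmin : ∀ s' ∈ Set.Icc (0:ℝ) 1,
      (∑ i, Real.exp (-(s₀ * v i))) ≤ ∑ i, Real.exp (-(s' * v i))) :
    0 ≤ ∑ i, Real.exp (-(s₀ * v i)) * (s₀ * v i) := by
  set w : Fin m → ℝ := fun i => s₀ * v i with hw
  set F : ℝ → ℝ := fun ε => ∑ i, Real.exp (-(w i)) * w i * Real.exp (ε * w i) with hF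
  have hFc : Continuous F := by
    apply continuous_finset_sum
    intro i _
    fun_prop
  have hF0 : F 0 = ∑ i, Real.exp (-(w i)) * w i := by
    simp [hF]
  have hev : ∀ᶠ ε in nhdsWithin (0:ℝ) (Set.Ioi 0), 0 ≤ F ε := by
    filter_upwards [Ioc_mem_nhdsGT (zero_lt_one)] with ε hε
    obtain ⟨hε0, hε1⟩ := hε
    have hmem : s₀ * (1 - ε) ∈ Set.Icc (0:ℝ) 1 := by
      constructor
      · exact mul_nonneg hs₀.1 (by linarith)
      · nlinarith [hs₀.1, hs₀.2]
    have h' := hmin _ hmem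
    have hrw : ∀ i : Fin m, Real.exp (-(s₀ * (1 - ε) * v i)) =
        Real.exp (-(w i)) * Real.exp (ε * w i) := by
      intro i
      rw [← Real.exp_add, hw]
      ring_nf
    simp_rw [hrw] at h'
    have h2 : 0 ≤ ∑ i, Real.exp (-(w i)) * (Real.exp (ε * w i) - 1) := by
      have : ∑ i, Real.exp (-(w i)) * (Real.exp (ε * w i) - 1)
          = (∑ i, Real.exp (-(w i)) * Real.exp (ε * w i)) - ∑ i, Real.exp (-(s₀ * v i)) := by
        rw [← Finset.sum_sub_distrib]
        exact Finset.sum_congr rfl fun i _ => by rw [hw]; ring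
      rw [this]
      linarith
    have h3 : ∑ i, Real.exp (-(w i)) * (Real.exp (ε * w i) - 1) ≤ ε * F ε := by
      rw [hF, Finset.mul_sum]
      refine Finset.sum_le_sum fun i _ => ?_
      have := mul_le_mul_of_nonneg_left (exp_sub_one_le_aux (ε * w i))
        (Real.exp_pos (-(w i))).le
      calc Real.exp (-(w i)) * (Real.exp (ε * w i) - 1)
          ≤ Real.exp (-(w i)) * ((ε * w i) * Real.exp (ε * w i)) := this
        _ = ε * (Real.exp (-(w i)) * w i * Real.exp (ε * w i)) := by ring
    nlinarith
  have htd : Filter.Tendsto F (nhdsWithin (0:ℝ) (Set.Ioi 0)) (nhds (F 0)) :=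
    (hFc.tendsto 0).mono_left nhdsWithin_le_nhds
  have := ge_of_tendsto htd hev
  rw [hF0] at this
  exact this

/-- In each round `t` of AdaBoost.S, the edge satisfies `δ_t ≥ R_{t−1}/B`,
where `B = ‖λ*‖₁ > 0` and `R_{t−1} = ln L(λ^{t−1}) − ln L(λ*)`.
(Round `t` is the step from `lam t` to `lam (t+1)`, with edge `|r t|`.) -/
theorem adaboostS_edge_ge_R_div_B {m N : ℕ} (hm : 0 < m)
    (M : Matrix (Fin m) (Fin N) ℝ) (hM : ∀ i j, |M i j| ≤ 1)
    (lam : ℕ → Fin N → ℝ) (j : ℕ → Fin N) (r : ℕ → ℝ) (s : ℕ → ℝ)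
    (hAda : IsAdaBoostS M lam j r s)
    (lamStar : Fin N → ℝ) (hB : 0 < l1 lamStar) (t : ℕ) :
    (Real.log (expLoss M (lam t)) - Real.log (expLoss M lamStar)) / l1 lamStar ≤ |r t| := by

  haveI : Nonempty (Fin m) := ⟨⟨0, hm⟩⟩
  obtain ⟨h0, hstep⟩ := hAda
  obtain ⟨hmax, hr, _, _, _⟩ := hstep t
  set a : Fin m → ℝ := M.mulVec (lam t) with ha
  set b : Fin m → ℝ := M.mulVec lamStar with hb
  set S : ℝ := ∑ i', Real.exp (-(a i')) with hS
  have hSpos : 0 < S := Finset.sum_pos (fun i _ => Real.exp_pos _) Finset.univ_nonempty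
  -- KKT : 0 ≤ ∑ exp(-a i) * a i
  have hkkt : 0 ≤ ∑ i, Real.exp (-(a i)) * a i := by
    cases t with
    | zero =>
        have : a = 0 := by rw [ha, h0, Matrix.mulVec_zero]
        simp [this]
    | succ u =>
        obtain ⟨_, _, hsu, hminu, hlamu⟩ := hstep u
        set lt : Fin N → ℝ :=
          lam u + Pi.single (j u) ((1 / 2) * Real.log ((1 + r u) / (1 - r u))) with hlt
        have hveq : ∀ (c : ℝ) (i : Fin m), M.mulVec (c • lt) i = c * M.mulVec lt i := by
          intro c i
          rw [Matrix.mulVec_smul]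
          rfl
        have hmin' : ∀ s' ∈ Set.Icc (0:ℝ) 1,
            (∑ i, Real.exp (-(s u * M.mulVec lt i))) ≤
              ∑ i, Real.exp (-(s' * M.mulVec lt i)) := by
          intro s' hs'
          have := hminu s' hs'
          unfold expLoss at this
          have hmpos : (0:ℝ) < 1 / (m:ℝ) := by positivity
          rw [mul_le_mul_iff_right₀ hmpos] at this
          simp_rw [hveq] at this
          exact this
        have := kkt_nonneg (M.mulVec lt) (s u) hsu hmin'
        have harw : ∀ i, a i = s u * M.mulVec lt i := by
          intro i; rw [ha, hlamu, hveq]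
        simp_rw [harw]
        exact this
  -- key log-sum-exp inequality
  have hkey := key_logsum hm a b
  -- sum p b ≤ |r t| * B
  have hpb : ∑ i, (Real.exp (-(a i)) / S) * b i ≤ |r t| * l1 lamStar := by
    have hswap : ∑ i, (Real.exp (-(a i)) / S) * b i
        = ∑ j', (∑ i, (Real.exp (-(a i)) / S) * M i j') * lamStar j' := by
      simp_rw [hb, Matrix.mulVec, dotProduct, Finset.mul_sum, Finset.sum_mul]
      rw [Finset.sum_comm]
      exact Finset.sum_congr rfl fun j' _ => Finset.sum_congr rfl fun i _ => by ring
    rw [hswap, l1, Finset.mul_sum]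
    refine Finset.sum_le_sum fun j' _ => ?_
    have h1 : |(∑ i, (Real.exp (-(a i)) / S) * M i j') * lamStar j'|
        ≤ |r t| * |lamStar j'| := by
      rw [abs_mul]
      refine mul_le_mul_of_nonneg_right ?_ (abs_nonneg _)
      have := hmax j'
      rw [hr]
      simpa [wt, ha, hS] using this
    calc (∑ i, (Real.exp (-(a i)) / S) * M i j') * lamStar j'
        ≤ |(∑ i, (Real.exp (-(a i)) / S) * M i j') * lamStar j'| := le_abs_self _
      _ ≤ |r t| * |lamStar j'| := h1
  -- ∑ p a ≥ 0
  have hpa : 0 ≤ ∑ i, (Real.exp (-(a i)) / S) * a i := by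
    have : ∑ i, (Real.exp (-(a i)) / S) * a i = (∑ i, Real.exp (-(a i)) * a i) / S := by
      rw [Finset.sum_div]
      exact Finset.sum_congr rfl fun i _ => by ring
    rw [this]
    exact div_nonneg hkkt hSpos.le
  -- logs of expLoss
  have hSb : 0 < ∑ i, Real.exp (-(b i)) :=
    Finset.sum_pos (fun i _ => Real.exp_pos _) Finset.univ_nonempty
  have hlogL : ∀ (v : Fin N → ℝ), Real.log (expLoss M v)
      = Real.log (1 / (m:ℝ)) + Real.log (∑ i, Real.exp (-(M.mulVec v i))) := by
    intro v
    rw [expLoss, Real.log_mul (by positivity)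
      (ne_of_gt (Finset.sum_pos (fun i _ => Real.exp_pos _) Finset.univ_nonempty))]
  rw [div_le_iff₀ hB]
  have hdiff : Real.log (expLoss M (lam t)) - Real.log (expLoss M lamStar)
      = Real.log (∑ i, Real.exp (-(a i))) - Real.log (∑ i, Real.exp (-(b i))) := by
    rw [hlogL, hlogL]; ring
  rw [hdiff]
  have hsplit : ∑ i, (Real.exp (-(a i)) / S) * (b i - a i)
      = (∑ i, (Real.exp (-(a i)) / S) * b i) - ∑ i, (Real.exp (-(a i)) / S) * a i := by
    rw [← Finset.sum_sub_distrib]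
    exact Finset.sum_congr rfl fun i _ => by ring
  have : ∑ i, (Real.exp (-(a i)) / ∑ i', Real.exp (-(a i'))) * (b i - a i)
      ≤ |r t| * l1 lamStar := by
    rw [← hS, hsplit]
    linarith
  linarith [hkey, this]
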